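/- Let S and A be finite nonempty types, let γ ∈ (0,1), let R : S × A → ℝ satisfy 0 ≤ R(s,a) ≤ 1 for all (s,a), and let T₁ and T₂ be two transition functions on S and A such that for every (s,a), ∑_{s'∈S} |T₁ s a s' − T₂ s a s'| ≤ β for some β ≥ 0. Then for every policy π : S → A, every (s,a) ∈ S × A, and every horizon H ∈ ℕ, the finite-horizon Q-values computed with T₁ and T₂ respectively satisfy |Q₁(s,a,H) − Q₂(s,a,H)| ≤ min(γ·β/(1−γ)², β·H²). -/

import Mathlib

open Finset

/-- Finite-horizon Q-value: `Qval T R γ π t s a` is the `t`-step Q-value of policy `π`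
in the MDP with transitions `T`, rewards `R`, and discount `γ`. -/
noncomputable def Qval {S A : Type*} [Fintype S] (T : S → A → S → ℝ) (R : S → A → ℝ)
    (γ : ℝ) (π : S → A) : ℕ → S → A → ℝ
  | 0 => fun _ _ => 0
  | (t + 1) => fun s a => R s a + γ * ∑ s', T s a s' * Qval T R γ π t s' (π s')

section Aux

variable {S A : Type*} [Fintype S] (T : S → A → S → ℝ) (R : S → A → ℝ) (γ : ℝ) (π : S → A)

lemma Qval_nonneg (hγ : 0 ≤ γ) (hR : ∀ s a, 0 ≤ R s a) (hT : ∀ s a s', 0 ≤ T s a s') :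
    ∀ t s a, 0 ≤ Qval T R γ π t s a := by
  intro t
  induction t with
  | zero => intro s a; simp [Qval]
  | succ t ih =>
    intro s a
    simp only [Qval]
    have h : 0 ≤ ∑ s', T s a s' * Qval T R γ π t s' (π s') :=
      Finset.sum_nonneg fun s' _ => mul_nonneg (hT s a s') (ih s' (π s'))
    exact add_nonneg (hR s a) (mul_nonneg hγ h)

lemma Qval_le_fixed (hγ0 : 0 ≤ γ) (hR : ∀ s a, R s a ≤ 1)
    (hT0 : ∀ s a s', 0 ≤ T s a s') (hT1 : ∀ s a, ∑ s', T s a s' = 1)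
    (B : ℝ) (hB0 : 0 ≤ B) (hfix : 1 + γ * B ≤ B) :
    ∀ t s a, Qval T R γ π t s a ≤ B := by
  intro t
  induction t with
  | zero => intro s a; simpa [Qval] using hB0
  | succ t ih =>
    intro s a
    simp only [Qval]
    have h : ∑ s', T s a s' * Qval T R γ π t s' (π s') ≤ B := by
      calc ∑ s', T s a s' * Qval T R γ π t s' (π s')
          ≤ ∑ s', T s a s' * B :=
            Finset.sum_le_sum fun s' _ => mul_le_mul_of_nonneg_left (ih s' (π s')) (hT0 s a s')
        _ = B := by rw [← Finset.sum_mul, hT1, one_mul]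
    calc R s a + γ * ∑ s', T s a s' * Qval T R γ π t s' (π s')
        ≤ 1 + γ * B := add_le_add (hR s a) (mul_le_mul_of_nonneg_left h hγ0)
      _ ≤ B := hfix

lemma Qval_le_horizon (hγ0 : 0 ≤ γ) (hγ1 : γ ≤ 1) (hR : ∀ s a, R s a ≤ 1)
    (hT0 : ∀ s a s', 0 ≤ T s a s') (hT1 : ∀ s a, ∑ s', T s a s' = 1) :
    ∀ t s a, Qval T R γ π t s a ≤ (t : ℝ) := by
  intro t
  induction t with
  | zero => intro s a; simp [Qval]
  | succ t ih =>
    intro s a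
    simp only [Qval]
    have h : ∑ s', T s a s' * Qval T R γ π t s' (π s') ≤ (t : ℝ) := by
      calc ∑ s', T s a s' * Qval T R γ π t s' (π s')
          ≤ ∑ s', T s a s' * (t : ℝ) :=
            Finset.sum_le_sum fun s' _ => mul_le_mul_of_nonneg_left (ih s' (π s')) (hT0 s a s')
        _ = (t : ℝ) := by rw [← Finset.sum_mul, hT1, one_mul]
    have ht : (0 : ℝ) ≤ t := Nat.cast_nonneg t
    push_cast
    nlinarith [hR s a]

end Aux

theorem epsilon_close_finite_rewards
    {S A : Type*} [Fintype S] [Nonempty S] [Fintype A] [Nonempty A]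
    (γ : ℝ) (hγ0 : 0 < γ) (hγ1 : γ < 1)
    (R : S → A → ℝ) (hR0 : ∀ s a, 0 ≤ R s a) (hR1 : ∀ s a, R s a ≤ 1)
    (T₁ T₂ : S → A → S → ℝ)
    (hT₁0 : ∀ s a s', 0 ≤ T₁ s a s') (hT₁1 : ∀ s a, ∑ s', T₁ s a s' = 1)
    (hT₂0 : ∀ s a s', 0 ≤ T₂ s a s') (hT₂1 : ∀ s a, ∑ s', T₂ s a s' = 1)
    (β : ℝ) (hβ : 0 ≤ β)
    (hd : ∀ s a, ∑ s', |T₁ s a s' - T₂ s a s'| ≤ β)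
    (π : S → A) (s : S) (a : A) (H : ℕ) :
    |Qval T₁ R γ π H s a - Qval T₂ R γ π H s a|
      ≤ min (γ * β / (1 - γ) ^ 2) (β * (H : ℝ) ^ 2) := by
  have h1γ : (0:ℝ) < 1 - γ := by linarith
  have hQ2nn := Qval_nonneg T₂ R γ π hγ0.le hR0 hT₂0
  -- key step lemma
  have key : ∀ (t : ℕ) (Bt D : ℝ), 0 ≤ Bt →
      (∀ s' a', |Qval T₂ R γ π t s' a'| ≤ Bt) →
      (∀ s' a', |Qval T₁ R γ π t s' a' - Qval T₂ R γ π t s' a'| ≤ D) →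
      ∀ s a, |Qval T₁ R γ π (t+1) s a - Qval T₂ R γ π (t+1) s a| ≤ γ * (β * Bt + D) := by
    intro t Bt D hBt hQ2 hdiff s a
    simp only [Qval]
    have hsum : (∑ s', T₁ s a s' * Qval T₁ R γ π t s' (π s'))
        - ∑ s', T₂ s a s' * Qval T₂ R γ π t s' (π s')
        = ∑ s', ((T₁ s a s' - T₂ s a s') * Qval T₂ R γ π t s' (π s')
            + T₁ s a s' * (Qval T₁ R γ π t s' (π s') - Qval T₂ R γ π t s' (π s'))) := by
      rw [← Finset.sum_sub_distrib]
      exact Finset.sum_congr rfl fun s' _ => by ring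
    have heq : (R s a + γ * ∑ s', T₁ s a s' * Qval T₁ R γ π t s' (π s'))
        - (R s a + γ * ∑ s', T₂ s a s' * Qval T₂ R γ π t s' (π s'))
        = γ * (∑ s', ((T₁ s a s' - T₂ s a s') * Qval T₂ R γ π t s' (π s')
            + T₁ s a s' * (Qval T₁ R γ π t s' (π s') - Qval T₂ R γ π t s' (π s')))) := by
      rw [← hsum]; ring
    rw [heq, abs_mul, abs_of_pos hγ0]
    refine mul_le_mul_of_nonneg_left ?_ hγ0.le
    calc |∑ s', ((T₁ s a s' - T₂ s a s') * Qval T₂ R γ π t s' (π s')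
            + T₁ s a s' * (Qval T₁ R γ π t s' (π s') - Qval T₂ R γ π t s' (π s')))|
        ≤ ∑ s', |(T₁ s a s' - T₂ s a s') * Qval T₂ R γ π t s' (π s')
            + T₁ s a s' * (Qval T₁ R γ π t s' (π s') - Qval T₂ R γ π t s' (π s'))| :=
          Finset.abs_sum_le_sum_abs _ _
      _ ≤ ∑ s', (|T₁ s a s' - T₂ s a s'| * Bt + T₁ s a s' * D) := by
          refine Finset.sum_le_sum fun s' _ => ?_
          have h1 : |(T₁ s a s' - T₂ s a s') * Qval T₂ R γ π t s' (π s')|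
              ≤ |T₁ s a s' - T₂ s a s'| * Bt := by
            rw [abs_mul]
            exact mul_le_mul_of_nonneg_left (hQ2 _ _) (abs_nonneg _)
          have h2 : |T₁ s a s' * (Qval T₁ R γ π t s' (π s') - Qval T₂ R γ π t s' (π s'))|
              ≤ T₁ s a s' * D := by
            rw [abs_mul, abs_of_nonneg (hT₁0 s a s')]
            exact mul_le_mul_of_nonneg_left (hdiff _ _) (hT₁0 s a s')
          calc _ ≤ _ := abs_add_le _ _
            _ ≤ _ := add_le_add h1 h2
      _ = (∑ s', |T₁ s a s' - T₂ s a s'|) * Bt + (∑ s', T₁ s a s') * D := by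
          rw [Finset.sum_add_distrib, ← Finset.sum_mul, ← Finset.sum_mul]
      _ = (∑ s', |T₁ s a s' - T₂ s a s'|) * Bt + D := by rw [hT₁1, one_mul]
      _ ≤ β * Bt + D := by
          exact add_le_add_left (mul_le_mul_of_nonneg_right (hd s a) hBt) D
  -- bound 1
  have bound1 : ∀ (t : ℕ) (s : S) (a : A),
      |Qval T₁ R γ π t s a - Qval T₂ R γ π t s a| ≤ γ * β / (1 - γ) ^ 2 := by
    intro t
    induction t with
    | zero => intro s a; simp [Qval]; positivity
    | succ t ih =>
      have hB0 : (0:ℝ) ≤ 1 / (1 - γ) := by positivity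
      have hfix : 1 + γ * (1 / (1 - γ)) ≤ 1 / (1 - γ) := by
        have h : 1 + γ * (1 / (1 - γ)) = 1 / (1 - γ) := by
          field_simp
          ring
        linarith
      have hQ2 : ∀ s' a', |Qval T₂ R γ π t s' a'| ≤ 1 / (1 - γ) := by
        intro s' a'
        rw [abs_of_nonneg (hQ2nn t s' a')]
        exact Qval_le_fixed T₂ R γ π hγ0.le hR1 hT₂0 hT₂1 _ hB0 hfix t s' a'
      intro s a
      have := key t (1 / (1 - γ)) (γ * β / (1 - γ) ^ 2) hB0 hQ2 ih s a
      have heq : γ * (β * (1 / (1 - γ)) + γ * β / (1 - γ) ^ 2) = γ * β / (1 - γ) ^ 2 := by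
        field_simp
        ring
      linarith [this, heq ▸ this]
  -- bound 2
  have bound2 : ∀ (t : ℕ) (s : S) (a : A),
      |Qval T₁ R γ π t s a - Qval T₂ R γ π t s a| ≤ β * (t : ℝ) ^ 2 := by
    intro t
    induction t with
    | zero => intro s a; simp [Qval]
    | succ t ih =>
      have ht : (0:ℝ) ≤ (t : ℝ) := Nat.cast_nonneg t
      have hQ2 : ∀ s' a', |Qval T₂ R γ π t s' a'| ≤ (t : ℝ) := by
        intro s' a'
        rw [abs_of_nonneg (hQ2nn t s' a')]
        exact Qval_le_horizon T₂ R γ π hγ0.le hγ1.le hR1 hT₂0 hT₂1 t s' a'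
      intro s a
      have := key t (t : ℝ) (β * (t : ℝ) ^ 2) ht hQ2 ih s a
      have h2 : γ * (β * (t : ℝ) + β * (t : ℝ) ^ 2) ≤ β * ((t : ℝ) + 1) ^ 2 := by
        nlinarith [mul_nonneg (sub_nonneg.mpr hγ1.le)
          (by positivity : (0:ℝ) ≤ β * (t:ℝ) + β * (t:ℝ) ^ 2), mul_nonneg hβ ht]
      push_cast
      linarith
  exact le_min (bound1 H s a) (bound2 H s a)
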